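/- Let A be an unrestricted Rabin automaton, T ⊆ Σ* a subtree containing the root, and f : T → A a map accepted by A (via α : T → S with each (α(w); f(w); (α(wσ))_{σ∈Σ_T(w)}) a sub-bundle of some bundle in T). Then there exists a configuration f̄ ∈ Sh_A with f̄|_T = f. -/

import Mathlib

variable {σ A : Type}

/-- The shift action: `shiftMap f w = f^w`, where `f^w (w') = f (w w')`. -/
def shiftMap (f : List σ → A) (w : List σ) : List σ → A := fun w' => f (w ++ w')

/-- A tree shift: a closed, shift-invariant subset of `A^{Σ*}` (prodiscrete topology). -/
def IsTreeShift [TopologicalSpace A] (X : Set (List σ → A)) : Prop :=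
  IsClosed X ∧ ∀ f ∈ X, ∀ w : List σ, shiftMap f w ∈ X

/-- The set of configurations accepted by the unrestricted Rabin automaton with
transition-bundle set `Tr ⊆ S × A × S^Σ`: `f` is accepted via a homomorphism
`α : Σ* → S` with `(α(w); f(w); (α(wσ))_σ) ∈ Tr` for all `w`. -/
def ShA {S : Type} (Tr : Set (S × A × (σ → S))) : Set (List σ → A) :=
  {f | ∃ α : List σ → S, ∀ w : List σ, (α w, f w, fun s => α (w ++ [s])) ∈ Tr}

/-- Iterate a prefix-dependent transition along a reversed word. -/
def auxChain {σ S : Type} (init : S) (F : List σ → S → σ → S) : List σ → S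
  | [] => init
  | s :: r => F r.reverse (auxChain init F r) s

/-- A map accepted by an essential unrestricted Rabin automaton on a subtree of `Σ*`
extends to an accepted configuration. Acceptance on the subtree `T` means: there is
`α : T → S` such that at each `w ∈ T`, `(α(w); f(w); (α(wσ))_{σ ∈ Σ_T(w)})` is a
sub-bundle of some transition bundle. -/
theorem accepted_on_subtree_extends [Finite σ] [Nonempty σ] [Finite A] [Nonempty A]
    {S : Type} [Finite S] (Tr : Set (S × A × (σ → S)))
    (hess : ∀ s : S, ∃ t ∈ Tr, t.1 = s)
    (T : Set (List σ)) (hroot : ([] : List σ) ∈ T)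
    (hpref : ∀ (w : List σ) (s : σ), w ++ [s] ∈ T → w ∈ T)
    (f : List σ → A) (α : List σ → S)
    (hacc : ∀ w ∈ T, ∃ t ∈ Tr, t.1 = α w ∧ t.2.1 = f w ∧
              ∀ s : σ, w ++ [s] ∈ T → t.2.2 s = α (w ++ [s])) :
    ∃ g ∈ ShA Tr, ∀ w ∈ T, g w = f w := by
  classical
  choose t ht htr htf hts using hacc
  choose u hu hutr using hess
  let bundle : List σ → S → S × A × (σ → S) := fun w st =>
    if h : w ∈ T then t w h else u st
  let β : List σ → S := fun w =>
    auxChain (α []) (fun w st s => (bundle w st).2.2 s) w.reverse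
  have hstep : ∀ (w : List σ) (s : σ), β (w ++ [s]) = (bundle w (β w)).2.2 s := by
    intro w s
    show auxChain _ _ (w ++ [s]).reverse = _
    rw [List.reverse_append]
    simp [auxChain, List.reverse_reverse]
    rfl
  have hβT : ∀ w ∈ T, β w = α w := by
    intro w
    induction w using List.reverseRecOn with
    | nil => intro _; simp [β, auxChain]
    | append_singleton w s ih =>
      intro hw
      have hwT := hpref w s hw
      rw [hstep]
      have : bundle w (β w) = t w hwT := dif_pos hwT
      rw [this]
      exact hts w hwT s hw
  have hb1 : ∀ w : List σ, (bundle w (β w)).1 = β w := by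
    intro w
    by_cases h : w ∈ T
    · have : bundle w (β w) = t w h := dif_pos h
      rw [this, htr w h, hβT w h]
    · have : bundle w (β w) = u (β w) := dif_neg h
      rw [this, hutr]
  refine ⟨fun w => (bundle w (β w)).2.1, ⟨β, ?_⟩, ?_⟩
  · intro w
    have heq : (β w, (bundle w (β w)).2.1, fun s => β (w ++ [s])) = bundle w (β w) := by
      refine Prod.ext ?_ (Prod.ext rfl ?_)
      · exact (hb1 w).symm
      · exact funext fun s => hstep w s
    rw [heq]
    by_cases h : w ∈ T
    · have : bundle w (β w) = t w h := dif_pos h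
      rw [this]; exact ht w h
    · have : bundle w (β w) = u (β w) := dif_neg h
      rw [this]; exact hu (β w)
  · intro w hw
    show (bundle w (β w)).2.1 = f w
    have : bundle w (β w) = t w hw := dif_pos hw
    rw [this]
    exact htf w hw
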